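/- Assume in addition that there is ε > 0 with u_k ≥ ε for every k ≥ 0, and for an integer d ≥ 1 set δ_d := sup_{k ≥ d} |u_k − 1/μ|. Then there is a constant C < ∞, depending only on ε and μ, such that for all integers d ≥ 1 and all integers 0 ≤ r ≤ s ≤ N with s − r ≥ d: |(u_{s−r}·u_N)/(u_{N−r}·u_s) − 1| ≤ C·δ_d. (Interpretation: the conditioned renewal process on {0,…,N} is clustering: the joint probability of a prescribed renewal configuration on {0,…,r−1} ending with a renewal point at r and a prescribed renewal configuration on {s,…,N−1} beginning with a renewal point at s differs from the product of the two probabilities by at most a C·δ_d relative error.) -/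

import Mathlib

noncomputable section

/-- The renewal sequence `(u_N)` associated with the waiting-time distribution
`(q_n)_{n ≥ 1}`: `u_0 = 1` and `u_N = Σ_{n=1}^N q_n · u_{N-n}`. -/
def renewalSeq (q : ℕ → ℝ) : ℕ → ℝ
  | 0 => 1
  | N + 1 => ∑ n ∈ Finset.range (N + 1), q (n + 1) * renewalSeq q (N - n)
  decreasing_by omega

lemma renewalSeq_le_one (q : ℕ → ℝ) (h0 : q 0 = 0) (hq : ∀ n, 0 ≤ q n)
    (hs : HasSum q 1) : ∀ N, renewalSeq q N ≤ 1 := by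
  intro N
  induction N using Nat.strong_induction_on with
  | _ N ih =>
    match N with
    | 0 => simp [renewalSeq]
    | N + 1 =>
      rw [renewalSeq]
      have h1 : ∑ n ∈ Finset.range (N + 1), q (n + 1) * renewalSeq q (N - n)
          ≤ ∑ n ∈ Finset.range (N + 1), q (n + 1) := by
        apply Finset.sum_le_sum
        intro n _
        have := ih (N - n) (by omega)
        nlinarith [hq (n + 1)]
      have h2 : ∑ n ∈ Finset.range (N + 1), q (n + 1)
          = ∑ m ∈ Finset.range (N + 2), q m := by
        rw [Finset.sum_range_succ' (fun m => q m) (N + 1), h0, add_zero]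
      have h3 : ∑ m ∈ Finset.range (N + 2), q m ≤ 1 := by
        rw [← hs.tsum_eq]
        exact Summable.sum_le_tsum _ (fun i _ => hq i) hs.summable
      linarith

/-- Clustering of the conditioned renewal process: if `u_k ≥ ε > 0` for all `k`
and `δ_d = sup_{k ≥ d} |u_k - 1/μ|`, then
`|(u_{s-r}·u_N)/(u_{N-r}·u_s) - 1| ≤ C·δ_d` for all `0 ≤ r ≤ s ≤ N` with
`s - r ≥ d`, with `C` depending only on `ε` and `μ`. -/
theorem renewal_clustering (ε μ : ℝ) (hε : 0 < ε) :
    ∃ C : ℝ, ∀ q : ℕ → ℝ, q 0 = 0 → (∀ n, 0 ≤ q n) → HasSum q 1 →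
      Summable (fun n : ℕ => (n : ℝ) * q n) → (∑' n : ℕ, (n : ℝ) * q n) = μ →
      (∀ k, ε ≤ renewalSeq q k) →
      ∀ d : ℕ, 1 ≤ d → ∀ N r s : ℕ, r + d ≤ s → s ≤ N →
        |renewalSeq q (s - r) * renewalSeq q N /
            (renewalSeq q (N - r) * renewalSeq q s) - 1|
          ≤ C * ⨆ k : {k : ℕ // d ≤ k}, |renewalSeq q (k : ℕ) - 1 / μ| := by
  refine ⟨4 / (ε * ε), ?_⟩
  intro q h0 hq hsum _ _ hlow d hd N r s hrs hsN
  have hle1 := renewalSeq_le_one q h0 hq hsum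
  set u := renewalSeq q with hu
  set δ := ⨆ k : {k : ℕ // d ≤ k}, |u (k : ℕ) - 1 / μ| with hδ
  have hbdd : BddAbove (Set.range fun k : {k : ℕ // d ≤ k} => |u (k : ℕ) - 1 / μ|) := by
    refine ⟨1 + |1 / μ|, ?_⟩
    rintro x ⟨k, rfl⟩
    have h1 : |u (k : ℕ)| ≤ 1 := by
      rw [abs_of_pos (lt_of_lt_of_le hε (hlow k))]; exact hle1 k
    calc |u (k : ℕ) - 1 / μ| ≤ |u (k : ℕ)| + |1 / μ| := abs_sub _ _
      _ ≤ 1 + |1 / μ| := by linarith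
  have hds : ∀ k : ℕ, d ≤ k → |u k - 1 / μ| ≤ δ := fun k hk =>
    le_ciSup hbdd (⟨k, hk⟩ : {k : ℕ // d ≤ k})
  have h1 : d ≤ s - r := by omega
  have h2 : d ≤ N := by omega
  have h3 : d ≤ N - r := by omega
  have h4 : d ≤ s := by omega
  set a := u (s - r)
  set b := u N
  set c := u (N - r)
  set e := u s
  have hac : |a - c| ≤ 2 * δ := by
    calc |a - c| = |(a - 1/μ) - (c - 1/μ)| := by ring_nf
      _ ≤ |a - 1/μ| + |c - 1/μ| := abs_sub _ _
      _ ≤ 2 * δ := by linarith [hds _ h1, hds _ h3]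
  have hbe : |b - e| ≤ 2 * δ := by
    calc |b - e| = |(b - 1/μ) - (e - 1/μ)| := by ring_nf
      _ ≤ |b - 1/μ| + |e - 1/μ| := abs_sub _ _
      _ ≤ 2 * δ := by linarith [hds _ h2, hds _ h4]
  have hδ0 : 0 ≤ δ := le_trans (abs_nonneg _) (hds d le_rfl)
  have ha : ε ≤ a := hlow _
  have hb : ε ≤ b := hlow _
  have hc : ε ≤ c := hlow _
  have he : ε ≤ e := hlow _
  have hb1 : b ≤ 1 := hle1 _
  have hc1 : c ≤ 1 := hle1 _
  have hce : 0 < c * e := mul_pos (lt_of_lt_of_le hε hc) (lt_of_lt_of_le hε he)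
  have hnum : |a * b - c * e| ≤ 4 * δ := by
    have : a * b - c * e = (a - c) * b + c * (b - e) := by ring
    rw [this]
    calc |(a - c) * b + c * (b - e)| ≤ |(a - c) * b| + |c * (b - e)| := abs_add_le _ _
      _ = |a - c| * |b| + |c| * |b - e| := by rw [abs_mul, abs_mul]
      _ ≤ (2 * δ) * 1 + 1 * (2 * δ) := by
          have hbabs : |b| ≤ 1 := by rw [abs_of_pos (lt_of_lt_of_le hε hb)]; exact hb1
          have hcabs : |c| ≤ 1 := by rw [abs_of_pos (lt_of_lt_of_le hε hc)]; exact hc1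
          gcongr <;> positivity
      _ = 4 * δ := by ring
  have key : a * b / (c * e) - 1 = (a * b - c * e) / (c * e) := by
    rw [sub_div, div_self (ne_of_gt hce)]
  rw [key, abs_div, abs_of_pos hce]
  calc |a * b - c * e| / (c * e) ≤ (4 * δ) / (ε * ε) := by
        apply div_le_div₀ (by positivity) hnum (by positivity)
        exact mul_le_mul hc he (le_of_lt hε) (le_trans (le_of_lt hε) hc)
    _ = 4 / (ε * ε) * δ := by ring
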